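/- Let F ≠ 0 be a multilinear homogeneous polynomial of degree d in ℂ[X_1,…,X_n], and let t be its number of monomials. For 1 ≤ α ≤ n−1 put τ_α = max{ C(α,d₁)·C(n−α, d−d₁) : max(d−(n−α),0) ≤ d₁ ≤ min(α,d) } (binomial coefficients), and τ = max{ τ_α : 1 ≤ α ≤ n−1 }. (b) If F splits across a nontrivial bipartition (E,E') with #E = α, then t ≤ τ_α. (c) Consequently, if t > τ, then F splits across no nontrivial bipartition (the corresponding state is genuinely entangled). -/

import Mathlib

open MvPolynomial Finset

lemma weight_one_eq_card {n : ℕ} (u : Fin n →₀ ℕ) (hu : ∀ j, u j ≤ 1) :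
    (Finsupp.weight 1) u = u.support.card := by
  rw [Finsupp.weight_apply, Finsupp.sum, Finset.card_eq_sum_ones]
  refine Finset.sum_congr rfl fun i hi => ?_
  have h1 : u i ≠ 0 := Finsupp.mem_support_iff.mp hi
  have h2 := hu i
  simp only [Pi.one_apply, smul_eq_mul, mul_one]
  omega

set_option maxHeartbeats 1000000 in
lemma split_bound {n d : ℕ} (F : MvPolynomial (Fin n) ℂ) (hF : F ≠ 0)
    (hml : ∀ j, F.degreeOf j ≤ 1) (hhom : F.IsHomogeneous d)
    (E : Finset (Fin n)) (p q : MvPolynomial (Fin n) ℂ)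
    (hpq : F = p * q) (hp : p.vars ⊆ E) (hq : q.vars ⊆ Eᶜ) :
    ∃ D1 ∈ Finset.Icc (d - (n - E.card)) (min E.card d),
      F.support.card ≤ Nat.choose E.card D1 * Nat.choose (n - E.card) (d - D1) := by
  have hp0 : p ≠ 0 := fun h => hF (by simp [hpq, h])
  have hq0 : q ≠ 0 := fun h => hF (by simp [hpq, h])
  -- variables of monomials of p are in E, of q in Eᶜ
  have hpe : ∀ u ∈ p.support, ∀ i, u i ≠ 0 → i ∈ E := by
    intro u hu i hi
    exact hp ((mem_vars i).mpr ⟨u, hu, Finsupp.mem_support_iff.mpr hi⟩)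
  have hqe : ∀ u ∈ q.support, ∀ i, u i ≠ 0 → i ∉ E := by
    intro u hu i hi
    simpa using hq ((mem_vars i).mpr ⟨u, hu, Finsupp.mem_support_iff.mpr hi⟩)
  -- coefficient of a sum monomial
  have hcoeff : ∀ a ∈ p.support, ∀ b ∈ q.support,
      MvPolynomial.coeff (a + b) F = MvPolynomial.coeff a p * MvPolynomial.coeff b q := by
    intro a ha b hb
    rw [hpq, coeff_mul]
    refine Finset.sum_eq_single_of_mem (a, b) (Finset.HasAntidiagonal.mem_antidiagonal.mpr rfl) ?_
    · rintro ⟨u, v⟩ huv hne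
      rw [Finset.HasAntidiagonal.mem_antidiagonal] at huv
      by_contra h
      have hu : u ∈ p.support := by
        rw [MvPolynomial.mem_support_iff]; intro h'; exact h (by simp [h'])
      have hv : v ∈ q.support := by
        rw [MvPolynomial.mem_support_iff]; intro h'; exact h (by simp [h'])
      have heq : ∀ i, u i = a i ∧ v i = b i := by
        intro i
        have h1 : u i + v i = a i + b i := by
          have := DFunLike.congr_fun huv i
          simpa using this
        by_cases hiE : i ∈ E
        · have hv0 : v i = 0 := by by_contra h; exact hqe v hv i h hiE
          have hb0 : b i = 0 := by by_contra h; exact hqe b hb i h hiE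
          omega
        · have hu0 : u i = 0 := by by_contra h; exact hiE (hpe u hu i h)
          have ha0 : a i = 0 := by by_contra h; exact hiE (hpe a ha i h)
          omega
      exact hne (by
        ext i
        · exact (heq i).1
        · exact (heq i).2)
  -- products of monomials are in F's support
  have hmemF : ∀ a ∈ p.support, ∀ b ∈ q.support, a + b ∈ F.support := by
    intro a ha b hb
    rw [MvPolynomial.mem_support_iff, hcoeff a ha b hb]
    exact mul_ne_zero (MvPolynomial.mem_support_iff.mp ha) (MvPolynomial.mem_support_iff.mp hb)
  have h01 : ∀ m ∈ F.support, ∀ j, m j ≤ 1 := by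
    intro m hm j
    refine le_trans ?_ (hml j)
    rw [degreeOf_eq_sup]
    exact Finset.le_sup (f := fun m => m j) hm
  obtain ⟨a₀, ha₀⟩ := MvPolynomial.support_nonempty.mpr hp0
  obtain ⟨b₀, hb₀⟩ := MvPolynomial.support_nonempty.mpr hq0
  set W : (Fin n →₀ ℕ) → ℕ := fun u => Finsupp.weight 1 u with hW
  have hWadd : ∀ u v, W (u + v) = W u + W v := fun u v => map_add _ u v
  have hd : ∀ a ∈ p.support, ∀ b ∈ q.support, W a + W b = d := by
    intro a ha b hb
    rw [← hWadd]
    exact hhom (MvPolynomial.mem_support_iff.mp (hmemF a ha b hb))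
  set D1 := W a₀ with hD1
  have hWp : ∀ a ∈ p.support, W a = D1 := by
    intro a ha
    have h1 := hd a ha b₀ hb₀
    have h2 := hd a₀ ha₀ b₀ hb₀
    omega
  have hWq : ∀ b ∈ q.support, W b = d - D1 := by
    intro b hb
    have h1 := hd a₀ ha₀ b hb
    omega
  have hD1d : D1 ≤ d := by have := hd a₀ ha₀ b₀ hb₀; omega
  -- decomposition facts for monomials of F
  have hdecomp : ∀ m ∈ F.support, ∃ a ∈ p.support, ∃ b ∈ q.support, a + b = m := by
    intro m hm
    have := MvPolynomial.support_mul p q (hpq ▸ hm)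
    exact Finset.mem_add.mp this
  have hEcard : Eᶜ.card = n - E.card := by
    rw [Finset.card_compl, Fintype.card_fin]
  have hkey : ∀ m ∈ F.support,
      (m.support ∩ E).card = D1 ∧ (m.support ∩ Eᶜ).card = d - D1 := by
    intro m hm
    obtain ⟨a, ha, b, hb, hab⟩ := hdecomp m hm
    have hma : m.support ∩ E = a.support := by
      ext i
      simp only [Finset.mem_inter, Finsupp.mem_support_iff, ← hab, Finsupp.add_apply]
      by_cases hiE : i ∈ E
      · have hb0 : b i = 0 := by by_contra h; exact hqe b hb i h hiE
        simp [hiE, hb0]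
      · have ha0 : a i = 0 := by by_contra h; exact hiE (hpe a ha i h)
        simp [hiE, ha0]
    have hmb : m.support ∩ Eᶜ = b.support := by
      ext i
      simp only [Finset.mem_inter, Finset.mem_compl, Finsupp.mem_support_iff, ← hab,
        Finsupp.add_apply]
      by_cases hiE : i ∈ E
      · have hb0 : b i = 0 := by by_contra h; exact hqe b hb i h hiE
        simp [hiE, hb0]
      · have ha0 : a i = 0 := by by_contra h; exact hiE (hpe a ha i h)
        simp [hiE, ha0]
    have hma1 : ∀ j, a j ≤ 1 := by
      intro j; have := h01 m hm j; rw [← hab] at this; simp only [Finsupp.add_apply] at this; omega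
    have hmb1 : ∀ j, b j ≤ 1 := by
      intro j; have := h01 m hm j; rw [← hab] at this; simp only [Finsupp.add_apply] at this; omega
    constructor
    · rw [hma, ← weight_one_eq_card a hma1]; exact hWp a ha
    · rw [hmb, ← weight_one_eq_card b hmb1]; exact hWq b hb
  refine ⟨D1, ?_, ?_⟩
  · -- D1 ∈ Icc
    rw [Finset.mem_Icc]
    have hm₀ := hmemF a₀ ha₀ b₀ hb₀
    obtain ⟨h1, h2⟩ := hkey _ hm₀
    have hle1 : D1 ≤ E.card := h1 ▸ Finset.card_le_card (Finset.inter_subset_right)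
    have hle2 : d - D1 ≤ n - E.card := by
      rw [← hEcard]
      exact h2 ▸ Finset.card_le_card (Finset.inter_subset_right)
    omega
  · -- counting
    calc F.support.card ≤ (E.powersetCard D1 ×ˢ Eᶜ.powersetCard (d - D1)).card := by
          apply Finset.card_le_card_of_injOn (fun m => (m.support ∩ E, m.support ∩ Eᶜ))
          · intro m hm
            obtain ⟨h1, h2⟩ := hkey m hm
            rw [Finset.mem_coe, Finset.mem_product, Finset.mem_powersetCard, Finset.mem_powersetCard]
            exact ⟨⟨Finset.inter_subset_right, h1⟩, ⟨Finset.inter_subset_right, h2⟩⟩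
          · intro m hm m' hm' heq
            simp only [Prod.mk.injEq] at heq
            have hsupp : m.support = m'.support := by
              have h1 : m.support = m.support ∩ E ∪ m.support ∩ Eᶜ := by
                rw [← Finset.inter_union_distrib_left, Finset.union_compl, Finset.inter_univ]
              have h2 : m'.support = m'.support ∩ E ∪ m'.support ∩ Eᶜ := by
                rw [← Finset.inter_union_distrib_left, Finset.union_compl, Finset.inter_univ]
              rw [h1, h2, heq.1, heq.2]
            ext i
            have hmi := h01 m hm i
            have hmi' := h01 m' hm' i
            have : (m i ≠ 0) ↔ (m' i ≠ 0) := by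
              rw [← Finsupp.mem_support_iff, ← Finsupp.mem_support_iff, hsupp]
            omega
      _ = Nat.choose E.card D1 * Nat.choose (n - E.card) (d - D1) := by
          rw [Finset.card_product, Finset.card_powersetCard, Finset.card_powersetCard, hEcard]

theorem stmt_4 (n d : ℕ) (F : MvPolynomial (Fin n) ℂ) (hF : F ≠ 0)
    (hml : ∀ j, F.degreeOf j ≤ 1) (hhom : F.IsHomogeneous d) :
    (∀ E : Finset (Fin n), E.Nonempty → E ≠ Finset.univ →
        (∃ p q : MvPolynomial (Fin n) ℂ, F = p * q ∧ p.vars ⊆ E ∧ q.vars ⊆ Eᶜ) →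
        F.support.card ≤
          (Finset.Icc (d - (n - E.card)) (min E.card d)).sup
            (fun d₁ => Nat.choose E.card d₁ * Nat.choose (n - E.card) (d - d₁))) ∧
    ((Finset.Icc 1 (n - 1)).sup (fun α =>
          (Finset.Icc (d - (n - α)) (min α d)).sup
            (fun d₁ => Nat.choose α d₁ * Nat.choose (n - α) (d - d₁)))
        < F.support.card →
      ∀ E : Finset (Fin n), E.Nonempty → E ≠ Finset.univ →
        ¬ ∃ p q : MvPolynomial (Fin n) ℂ, F = p * q ∧ p.vars ⊆ E ∧ q.vars ⊆ Eᶜ) := by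
  have hb : ∀ E : Finset (Fin n), E.Nonempty → E ≠ Finset.univ →
      (∃ p q : MvPolynomial (Fin n) ℂ, F = p * q ∧ p.vars ⊆ E ∧ q.vars ⊆ Eᶜ) →
      F.support.card ≤
        (Finset.Icc (d - (n - E.card)) (min E.card d)).sup
          (fun d₁ => Nat.choose E.card d₁ * Nat.choose (n - E.card) (d - d₁)) := by
    intro E _ _ ⟨p, q, hpq, hp, hq⟩
    obtain ⟨D1, hD1, hle⟩ := split_bound F hF hml hhom E p q hpq hp hq
    exact le_trans hle (Finset.le_sup
      (f := fun d₁ => Nat.choose E.card d₁ * Nat.choose (n - E.card) (d - d₁)) hD1)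
  refine ⟨hb, ?_⟩
  intro hτ E hE hEne hsplit
  have h1 := hb E hE hEne hsplit
  have hα : E.card ∈ Finset.Icc 1 (n - 1) := by
    rw [Finset.mem_Icc]
    constructor
    · exact Finset.card_pos.mpr hE
    · have h2 : E.card < Fintype.card (Fin n) :=
        Finset.card_lt_card (Finset.ssubset_univ_iff.mpr hEne)
      rw [Fintype.card_fin] at h2
      omega
  have h3 := Finset.le_sup (f := fun α =>
      (Finset.Icc (d - (n - α)) (min α d)).sup
        (fun d₁ => Nat.choose α d₁ * Nat.choose (n - α) (d - d₁))) hα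
  exact absurd hτ (not_lt.mpr (le_trans h1 h3))
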